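/- Let ν_ij (i,j ∈ {1,…,m}) be positive regular Borel measures on (−∞,0] with finite total variation, ν_ij({0}) = 0, and Σ_{j=1}^m ν_ij((−∞,0]) < 1 for each i. Then the operator D: BU → ℝ^m defined by D_i x = x_i(0) − Σ_{j=1}^m ∫_{−∞}^0 x_j(s) dν_ij(s) is stable. -/

import Mathlib

open MeasureTheory Filter Set

/-- `x` is bounded and uniformly continuous on `(-∞,0]` (membership in `BU`,
where only the restriction of `x` to `(-∞,0]` is relevant). -/
def IsBU (m : ℕ) (x : ℝ → Fin m → ℝ) : Prop :=
  (∃ C : ℝ, ∀ s : ℝ, s ≤ 0 → ‖x s‖ ≤ C) ∧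
  ∀ ε > (0:ℝ), ∃ δ > (0:ℝ), ∀ s : ℝ, s ≤ 0 → ∀ s' : ℝ, s' ≤ 0 →
    |s - s'| < δ → ‖x s - x s'‖ < ε

/-- the supremum norm `‖x‖_∞ = sup_{s ≤ 0} ‖x(s)‖`. -/
noncomputable def supNorm (m : ℕ) (x : ℝ → Fin m → ℝ) : ℝ :=
  ⨆ s : Set.Iic (0:ℝ), ‖x (s : ℝ)‖

/-- time shift: `shift m x t = x_t`, where `x_t(s) = x(t+s)`. -/
def shift (m : ℕ) (x : ℝ → Fin m → ℝ) (t : ℝ) : ℝ → Fin m → ℝ :=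
  fun s => x (t + s)

/-- The operator `Dx = x(0) - ∫_{-∞}^0 [dν(s)] x(s)`, where the matrix of real
(signed) Borel measures `ν` is given through a positive part `νp` and a
negative part `νn` (Jordan decomposition), i.e. `ν i j = νp i j - νn i j`. -/
noncomputable def Dop (m : ℕ) (νp νn : Fin m → Fin m → Measure ℝ)
    (x : ℝ → Fin m → ℝ) : Fin m → ℝ :=
  fun i => x 0 i - ∑ j : Fin m,
    ((∫ s in Set.Iic (0:ℝ), x s j ∂(νp i j)) - ∫ s in Set.Iic (0:ℝ), x s j ∂(νn i j))

/-- the measures `ν_ij` have finite total variation and `|ν_ij|({0}) = 0`. -/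
def NuCond (m : ℕ) (νp νn : Fin m → Fin m → Measure ℝ) : Prop :=
  (∀ i j, νp i j Set.univ ≠ ⊤) ∧ (∀ i j, νn i j Set.univ ≠ ⊤) ∧
  (∀ i j, νp i j {0} = 0) ∧ (∀ i j, νn i j {0} = 0)

/-- `D` is stable: there is a continuous `c : [0,∞) → [0,∞)` with `c(t) → 0`
as `t → ∞` such that every continuous `x : ℝ → ℝ^m` with `x_0 ∈ BU` and
`D x_t = 0` for all `t ≥ 0` satisfies `‖x(t)‖ ≤ c(t) ‖x_0‖_∞` for all `t ≥ 0`. -/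
def IsStableOp (m : ℕ) (D : (ℝ → Fin m → ℝ) → Fin m → ℝ) : Prop :=
  ∃ c : ℝ → ℝ, ContinuousOn c (Set.Ici 0) ∧ (∀ t : ℝ, 0 ≤ t → 0 ≤ c t) ∧
    Filter.Tendsto c Filter.atTop (nhds 0) ∧
    ∀ x : ℝ → Fin m → ℝ, Continuous x → IsBU m x →
      (∀ t : ℝ, 0 ≤ t → D (shift m x t) = 0) →
      ∀ t : ℝ, 0 ≤ t → ‖x t‖ ≤ c t * supNorm m x

/-- the convolution operator `D̂`, `(D̂x)(s) = D x_s`. -/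
noncomputable def Dhat (m : ℕ) (νp νn : Fin m → Fin m → Measure ℝ)
    (x : ℝ → Fin m → ℝ) : ℝ → Fin m → ℝ :=
  fun s => Dop m νp νn (shift m x s)

/-- the seminorm `‖x‖_n = sup_{s ∈ [-n,0]} ‖x(s)‖`. -/
noncomputable def normOn (m : ℕ) (n : ℕ) (x : ℝ → Fin m → ℝ) : ℝ :=
  ⨆ s : Set.Icc (-(n:ℝ)) 0, ‖x (s : ℝ)‖

/-- the compact-open metric
`d(x,y) = ∑_{n ≥ 1} 2⁻ⁿ ‖x-y‖_n / (1 + ‖x-y‖_n)`. -/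
noncomputable def coDist (m : ℕ) (x y : ℝ → Fin m → ℝ) : ℝ :=
  ∑' n : ℕ, (1/2 : ℝ)^(n+1) *
    (normOn m (n+1) (fun s => x s - y s)) / (1 + normOn m (n+1) (fun s => x s - y s))

/-- `sup_{0 ≤ u ≤ t} ‖h(u)‖`. -/
noncomputable def supOn (m : ℕ) (h : ℝ → Fin m → ℝ) (t : ℝ) : ℝ :=
  ⨆ u : Set.Icc (0:ℝ) t, ‖h (u : ℝ)‖

/-- the order `x ≤_D y`, i.e. `D x_s ≤ D y_s` (componentwise) for all `s ≤ 0`. -/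
def leD (m : ℕ) (νp νn : Fin m → Fin m → Measure ℝ) (x y : ℝ → Fin m → ℝ) : Prop :=
  ∀ s : ℝ, s ≤ 0 → ∀ i, Dhat m νp νn x s i ≤ Dhat m νp νn y s i

open MeasureTheory Filter Set Topology

section AuxStmt12

variable {m : ℕ} {ν : Fin m → Fin m → Measure ℝ}

lemma stmt12_supNorm_facts {x : ℝ → Fin m → ℝ} (hBU : ∃ C : ℝ, ∀ s : ℝ, s ≤ 0 → ‖x s‖ ≤ C) :
    0 ≤ supNorm m x ∧ ∀ s : ℝ, s ≤ 0 → ‖x s‖ ≤ supNorm m x := by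
  obtain ⟨C, hC⟩ := hBU
  have hbdd : BddAbove (Set.range fun s : Set.Iic (0:ℝ) => ‖x (s : ℝ)‖) := by
    refine ⟨C, ?_⟩
    rintro _ ⟨s, rfl⟩
    exact hC s s.2
  have h2 : ∀ s : ℝ, s ≤ 0 → ‖x s‖ ≤ supNorm m x := by
    intro s hs
    exact le_ciSup hbdd (⟨s, hs⟩ : Set.Iic (0:ℝ))
  exact ⟨le_trans (norm_nonneg (x 0)) (h2 0 le_rfl), h2⟩

lemma stmt12_integrable (hfin : ∀ i j, ν i j Set.univ ≠ ⊤) {x : ℝ → Fin m → ℝ}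
    (hx : Continuous x) {t B : ℝ} (hB : ∀ s : ℝ, s ≤ 0 → ‖x (t + s)‖ ≤ B) (i j : Fin m) :
    IntegrableOn (fun s => x (t + s) j) (Iic 0) (ν i j) := by
  haveI : IsFiniteMeasure (ν i j) := ⟨lt_top_iff_ne_top.2 (hfin i j)⟩
  have hc : Continuous fun s => x (t + s) j :=
    (continuous_apply j).comp (hx.comp (continuous_const.add continuous_id))
  refine Integrable.mono' (integrable_const B) hc.aestronglyMeasurable ?_
  refine (ae_restrict_iff' measurableSet_Iic).2 (Eventually.of_forall fun s hs => ?_)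
  exact (norm_le_pi_norm (x (t + s)) j).trans (hB s hs)

/-- Key estimate: splitting the representing integral at `-T`. -/
lemma stmt12_est (hfin : ∀ i j, ν i j Set.univ ≠ ⊤) {x : ℝ → Fin m → ℝ} (hx : Continuous x)
    {t T B1 B2 : ℝ} (hT : 0 ≤ T) (hB1 : 0 ≤ B1) (hB2 : 0 ≤ B2)
    (h1 : ∀ s : ℝ, -T < s → s ≤ 0 → ‖x (t + s)‖ ≤ B1)
    (h2 : ∀ s : ℝ, s ≤ -T → ‖x (t + s)‖ ≤ B2)
    (hid : ∀ i, x t i = ∑ j, ∫ s in Iic (0:ℝ), x (t + s) j ∂(ν i j)) (i : Fin m) :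
    |x t i| ≤ (∑ j, (ν i j (Iic (0:ℝ))).toReal) * B1
      + (∑ j, (ν i j (Iic (-T))).toReal) * B2 := by
  haveI : ∀ i j, IsFiniteMeasure (ν i j) := fun i j => ⟨lt_top_iff_ne_top.2 (hfin i j)⟩
  have hball : ∀ s : ℝ, s ≤ 0 → ‖x (t + s)‖ ≤ max B1 B2 := by
    intro s hs
    rcases le_or_gt s (-T) with h | h
    · exact (h2 s h).trans (le_max_right _ _)
    · exact (h1 s h hs).trans (le_max_left _ _)
  have hint : ∀ j, IntegrableOn (fun s => x (t + s) j) (Iic 0) (ν i j) :=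
    fun j => stmt12_integrable hfin hx hball i j
  have hTle : (-T : ℝ) ≤ 0 := neg_nonpos.2 hT
  have hsplit : ∀ j, (∫ s in Iic (0:ℝ), x (t + s) j ∂(ν i j)) =
      (∫ s in Iic (-T), x (t + s) j ∂(ν i j)) + ∫ s in Ioc (-T) 0, x (t + s) j ∂(ν i j) := by
    intro j
    rw [← setIntegral_union (Iic_disjoint_Ioc le_rfl) measurableSet_Ioc
      ((hint j).mono_set (Iic_subset_Iic.2 hTle))
      ((hint j).mono_set Ioc_subset_Iic_self), Iic_union_Ioc_eq_Iic hTle]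
  have hb1 : ∀ j, |∫ s in Ioc (-T) 0, x (t + s) j ∂(ν i j)| ≤ B1 * (ν i j (Iic (0:ℝ))).toReal := by
    intro j
    have := norm_setIntegral_le_of_norm_le_const (μ := ν i j) (s := Ioc (-T) 0)
      (f := fun s => x (t + s) j) (C := B1) (measure_lt_top _ _)
      (fun s hs => (norm_le_pi_norm (x (t + s)) j).trans (h1 s hs.1 hs.2))
    rw [Real.norm_eq_abs, measureReal_def] at this
    refine this.trans (mul_le_mul_of_nonneg_left ?_ hB1)
    exact ENNReal.toReal_mono (ne_top_of_le_ne_top (hfin i j) (measure_mono (subset_univ _)))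
      (measure_mono Ioc_subset_Iic_self)
  have hb2 : ∀ j, |∫ s in Iic (-T), x (t + s) j ∂(ν i j)| ≤ B2 * (ν i j (Iic (-T))).toReal := by
    intro j
    have := norm_setIntegral_le_of_norm_le_const (μ := ν i j) (s := Iic (-T))
      (f := fun s => x (t + s) j) (C := B2) (measure_lt_top _ _)
      (fun s hs => (norm_le_pi_norm (x (t + s)) j).trans (h2 s hs))
    rwa [Real.norm_eq_abs, measureReal_def] at this
  calc |x t i| = |∑ j, ∫ s in Iic (0:ℝ), x (t + s) j ∂(ν i j)| := by rw [hid i]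
    _ ≤ ∑ j, |∫ s in Iic (0:ℝ), x (t + s) j ∂(ν i j)| := Finset.abs_sum_le_sum_abs _ _
    _ ≤ ∑ j, (B1 * (ν i j (Iic (0:ℝ))).toReal + B2 * (ν i j (Iic (-T))).toReal) := by
        refine Finset.sum_le_sum fun j _ => ?_
        rw [hsplit j]
        exact (abs_add_le _ _).trans (by linarith [hb1 j, hb2 j])
    _ = (∑ j, (ν i j (Iic (0:ℝ))).toReal) * B1 + (∑ j, (ν i j (Iic (-T))).toReal) * B2 := by
        rw [Finset.sum_add_distrib, ← Finset.mul_sum, ← Finset.mul_sum]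
        ring

end AuxStmt12

set_option maxHeartbeats 1000000 in
/-- If the `ν_ij` are positive regular Borel measures on
`(-∞,0]` with finite total variation, `ν_ij({0}) = 0` and
`∑_j ν_ij((-∞,0]) < 1` for each `i`, then the operator
`D_i x = x_i(0) - ∑_j ∫_{-∞}^0 x_j(s) dν_ij(s)` is stable. -/

theorem statement12 (m : ℕ) (ν : Fin m → Fin m → Measure ℝ)
    (hfin : ∀ i j, ν i j Set.univ ≠ ⊤)
    (hsupp : ∀ i j, ν i j (Set.Ioi 0) = 0)
    (h0 : ∀ i j, ν i j {0} = 0)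
    (hsum : ∀ i, ∑ j : Fin m, (ν i j (Set.Iic 0)).toReal < 1) :
    IsStableOp m (Dop m ν (fun _ _ => 0)) := by
  classical
  rcases Nat.eq_zero_or_pos m with rfl | hm
  · refine ⟨fun _ => 0, continuousOn_const, fun t _ => le_rfl, tendsto_const_nhds, ?_⟩
    intro x hx hBU hD t ht
    have hxt : x t = 0 := Subsingleton.elim _ _
    rw [hxt, norm_zero, zero_mul]
  haveI : Nonempty (Fin m) := ⟨⟨0, hm⟩⟩
  set k : ℝ := Finset.univ.sup' Finset.univ_nonempty
      (fun i => ∑ j, (ν i j (Set.Iic (0:ℝ))).toReal) with hkdef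
  have hkle : ∀ i, (∑ j, (ν i j (Set.Iic (0:ℝ))).toReal) ≤ k := by
    intro i
    rw [hkdef]
    exact Finset.le_sup' (fun i => ∑ j, (ν i j (Set.Iic (0:ℝ))).toReal) (Finset.mem_univ i)
  have hk1 : k < 1 := by
    rw [hkdef]
    exact (Finset.sup'_lt_iff Finset.univ_nonempty).2 fun i _ => hsum i
  have hk0 : 0 ≤ k := le_trans (Finset.sum_nonneg fun j _ => ENNReal.toReal_nonneg)
    (hkle (Classical.arbitrary _))
  have h1k : 0 < 1 - k := by linarith
  -- the representation identity
  have hid : ∀ x : ℝ → Fin m → ℝ,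
      (∀ t : ℝ, 0 ≤ t → Dop m ν (fun _ _ => 0) (shift m x t) = 0) →
      ∀ t : ℝ, 0 ≤ t → ∀ i, x t i = ∑ j, ∫ s in Set.Iic (0:ℝ), x (t + s) j ∂(ν i j) := by
    intro x hD t ht i
    have h := congrFun (hD t ht) i
    simp only [Dop, shift, Pi.zero_apply, Measure.restrict_zero, integral_zero_measure,
      sub_zero, add_zero] at h
    linarith [h]
  -- boundedness on the future
  have hA : ∀ x : ℝ → Fin m → ℝ, Continuous x → IsBU m x →
      (∀ t : ℝ, 0 ≤ t → Dop m ν (fun _ _ => 0) (shift m x t) = 0) →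
      ∀ t : ℝ, 0 ≤ t → ‖x t‖ ≤ supNorm m x := by
    intro x hx hBU hD t ht
    obtain ⟨hM0, hMle⟩ := stmt12_supNorm_facts hBU.1
    obtain ⟨s0, hs0mem, hs0max⟩ := isCompact_Icc.exists_isMaxOn (Set.nonempty_Icc.2 ht)
      ((hx.norm).continuousOn)
    have hbnd : ∀ s : ℝ, s ≤ 0 → ‖x (s0 + s)‖ ≤ max (supNorm m x) ‖x s0‖ := by
      intro s hs
      rcases le_or_gt (s0 + s) 0 with h | h
      · exact (hMle _ h).trans (le_max_left _ _)
      · exact le_trans (hs0max ⟨h.le, by linarith [hs0mem.2]⟩) (le_max_right _ _)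
    have hest := stmt12_est (t := s0) (T := 0) hfin hx (le_refl (0:ℝ)) (le_refl (0:ℝ))
      (le_max_of_le_left hM0)
      (fun s hs1 hs2 => absurd hs2 (by rw [neg_zero] at hs1; exact not_le.2 hs1))
      (fun s hs => hbnd s (by rwa [neg_zero] at hs))
      (hid x hD s0 hs0mem.1)
    have hNle : ‖x s0‖ ≤ k * max (supNorm m x) ‖x s0‖ := by
      refine (pi_norm_le_iff_of_nonneg (mul_nonneg hk0 (le_max_of_le_left hM0))).2 fun i => ?_
      have h := hest i
      simp only [neg_zero, mul_zero, zero_add] at h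
      calc ‖x s0 i‖ = |x s0 i| := Real.norm_eq_abs _
        _ ≤ (∑ j, (ν i j (Set.Iic (0:ℝ))).toReal) * max (supNorm m x) ‖x s0‖ := h
        _ ≤ k * max (supNorm m x) ‖x s0‖ :=
            mul_le_mul_of_nonneg_right (hkle i) (le_max_of_le_left hM0)
    have hNM : ‖x s0‖ ≤ supNorm m x := by
      rcases le_or_gt ‖x s0‖ (supNorm m x) with h | h
      · exact h
      · exfalso
        rw [max_eq_right h.le] at hNle
        have hN0 : 0 < ‖x s0‖ := lt_of_le_of_lt hM0 h
        have hlt := mul_lt_mul_of_pos_right hk1 hN0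
        rw [one_mul] at hlt
        linarith
    exact le_trans (hs0max ⟨ht, le_rfl⟩) hNM
  have hglob : ∀ x : ℝ → Fin m → ℝ, Continuous x → IsBU m x →
      (∀ t : ℝ, 0 ≤ t → Dop m ν (fun _ _ => 0) (shift m x t) = 0) →
      ∀ t : ℝ, ‖x t‖ ≤ supNorm m x := by
    intro x hx hBU hD t
    rcases le_or_gt t 0 with h | h
    · exact (stmt12_supNorm_facts hBU.1).2 t h
    · exact hA x hx hBU hD t h.le
  -- iteration with tail splitting
  have hiter : ∀ T : ℝ, 0 ≤ T → ∀ δ : ℝ, 0 ≤ δ →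
      (∀ i, (∑ j, (ν i j (Set.Iic (-T))).toReal) ≤ δ) →
      ∀ x : ℝ → Fin m → ℝ, Continuous x → IsBU m x →
      (∀ t : ℝ, 0 ≤ t → Dop m ν (fun _ _ => 0) (shift m x t) = 0) →
      ∀ n : ℕ, ∀ t : ℝ, (n : ℝ) * T ≤ t →
        ‖x t‖ ≤ (k ^ n + δ / (1 - k)) * supNorm m x := by
    intro T hT δ hδ hδT x hx hBU hD
    obtain ⟨hM0, hMle⟩ := stmt12_supNorm_facts hBU.1
    have hδk : 0 ≤ δ / (1 - k) := div_nonneg hδ h1k.le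
    intro n
    induction n with
    | zero =>
      intro t ht
      simp only [Nat.cast_zero, zero_mul] at ht
      have h := hA x hx hBU hD t ht
      have h01 : (1:ℝ) ≤ k ^ 0 + δ / (1 - k) := by
        rw [pow_zero]; linarith
      nlinarith [mul_nonneg (by linarith : (0:ℝ) ≤ k ^ 0 + δ / (1 - k) - 1)
        (stmt12_supNorm_facts hBU.1).1]
    | succ n ih =>
      intro t ht
      have htn : (0:ℝ) ≤ t := le_trans (by positivity) ht
      have hB1 : (0:ℝ) ≤ (k ^ n + δ / (1 - k)) * supNorm m x := by positivity
      have h1 : ∀ s : ℝ, -T < s → s ≤ 0 →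
          ‖x (t + s)‖ ≤ (k ^ n + δ / (1 - k)) * supNorm m x := by
        intro s hs1 hs2
        refine ih (t + s) ?_
        push_cast at ht
        nlinarith
      have h2 : ∀ s : ℝ, s ≤ -T → ‖x (t + s)‖ ≤ supNorm m x :=
        fun s _ => hglob x hx hBU hD (t + s)
      have hest := stmt12_est hfin hx hT hB1 hM0 h1 h2 (hid x hD t htn)
      have heq : k * ((k ^ n + δ / (1 - k)) * supNorm m x) + δ * supNorm m x
          = (k ^ (n + 1) + δ / (1 - k)) * supNorm m x := by
        have hke : k * (δ / (1 - k)) + δ = δ / (1 - k) := by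
          field_simp
          ring
        linear_combination supNorm m x * hke
      refine (pi_norm_le_iff_of_nonneg (by positivity)).2 fun i => ?_
      calc ‖x t i‖ = |x t i| := Real.norm_eq_abs _
        _ ≤ (∑ j, (ν i j (Set.Iic (0:ℝ))).toReal) * ((k ^ n + δ / (1 - k)) * supNorm m x)
            + (∑ j, (ν i j (Set.Iic (-T))).toReal) * supNorm m x := hest i
        _ ≤ k * ((k ^ n + δ / (1 - k)) * supNorm m x) + δ * supNorm m x :=
            add_le_add (mul_le_mul_of_nonneg_right (hkle i) hB1)
              (mul_le_mul_of_nonneg_right (hδT i) hM0)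
        _ = (k ^ (n + 1) + δ / (1 - k)) * supNorm m x := heq
  -- small measure tails
  have tail : ∀ δ' : ℝ, 0 < δ' → ∃ N : ℕ, ∀ i j, (ν i j (Set.Iic (-(N:ℝ)))).toReal ≤ δ' := by
    intro δ' hδ'
    have h1 : ∀ i j, Tendsto (fun n : ℕ => (ν i j (Set.Iic (-(n:ℝ)))).toReal) atTop (𝓝 0) := by
      intro i j
      have hs : ∀ n : ℕ, NullMeasurableSet (Set.Iic (-(n:ℝ))) (ν i j) :=
        fun n => measurableSet_Iic.nullMeasurableSet
      have hanti : Antitone fun n : ℕ => Set.Iic (-(n:ℝ)) := fun a b hab =>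
        Iic_subset_Iic.2 (neg_le_neg (Nat.cast_le.2 hab))
      have hne : ν i j (Set.Iic (-((0:ℕ):ℝ))) ≠ ⊤ :=
        ne_top_of_le_ne_top (hfin i j) (measure_mono (subset_univ _))
      have htend := tendsto_measure_iInter_atTop hs hanti ⟨0, hne⟩
      have hempty : (⋂ n : ℕ, Set.Iic (-(n:ℝ))) = (∅ : Set ℝ) := by
        ext s
        simp only [Set.mem_iInter, Set.mem_Iic, Set.mem_empty_iff_false, iff_false, not_forall,
          not_le]
        obtain ⟨n, hn⟩ := exists_nat_gt (-s)
        exact ⟨n, by linarith⟩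
      rw [hempty, measure_empty] at htend
      have hcomp := (ENNReal.tendsto_toReal (by simp : (0:ENNReal) ≠ ⊤)).comp htend
      exact hcomp
    have h2 : ∀ᶠ n : ℕ in atTop, ∀ i j, (ν i j (Set.Iic (-(n:ℝ)))).toReal ≤ δ' := by
      rw [eventually_all]
      intro i
      rw [eventually_all]
      intro j
      exact (h1 i j).eventually (eventually_le_nhds hδ')
    exact h2.exists
  -- the uniform decay statement
  have key : ∀ ε : ℝ, 0 < ε → ∃ τ : ℝ, 0 ≤ τ ∧
      ∀ x : ℝ → Fin m → ℝ, Continuous x → IsBU m x →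
      (∀ t : ℝ, 0 ≤ t → Dop m ν (fun _ _ => 0) (shift m x t) = 0) →
      ∀ t : ℝ, τ ≤ t → ‖x t‖ ≤ ε * supNorm m x := by
    intro ε hε
    set δ : ℝ := ε * (1 - k) / 2 with hδdef
    have hδpos : 0 < δ := by
      rw [hδdef]
      exact div_pos (mul_pos hε h1k) two_pos
    have hm' : (0:ℝ) < m := by exact_mod_cast hm
    have hδm : 0 < δ / m := div_pos hδpos hm'
    obtain ⟨N, hN⟩ := tail (δ / m) hδm
    have hSig : ∀ i, (∑ j, (ν i j (Set.Iic (-(N:ℝ)))).toReal) ≤ δ := by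
      intro i
      calc (∑ j, (ν i j (Set.Iic (-(N:ℝ)))).toReal) ≤ ∑ _j : Fin m, δ / m :=
            Finset.sum_le_sum fun j _ => hN i j
        _ = δ := by
            rw [Finset.sum_const, Finset.card_univ, Fintype.card_fin, nsmul_eq_mul]
            field_simp
    obtain ⟨n, hn⟩ := ((tendsto_pow_atTop_nhds_zero_of_lt_one hk0 hk1).eventually
      (eventually_le_nhds (half_pos hε))).exists
    refine ⟨(n : ℝ) * N, by positivity, ?_⟩
    intro x hx hBU hD t ht
    have hM0 := (stmt12_supNorm_facts hBU.1).1
    have h := hiter (N : ℝ) (Nat.cast_nonneg N) δ hδpos.le hSig x hx hBU hD n t ht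
    have hδk : δ / (1 - k) = ε / 2 := by
      rw [hδdef]
      field_simp
    rw [hδk] at h
    refine h.trans (mul_le_mul_of_nonneg_right ?_ hM0)
    linarith
  -- choose decay times
  have key2 : ∀ n : ℕ, ∃ τ : ℝ, 0 ≤ τ ∧ ∀ x : ℝ → Fin m → ℝ, Continuous x → IsBU m x →
      (∀ t : ℝ, 0 ≤ t → Dop m ν (fun _ _ => 0) (shift m x t) = 0) →
      ∀ t : ℝ, τ ≤ t → ‖x t‖ ≤ (1/2 : ℝ) ^ n * supNorm m x :=
    fun n => key ((1/2 : ℝ) ^ n) (by positivity)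
  choose f hf0 hf using key2
  set u : ℕ → ℝ := fun n => (∑ i ∈ Finset.range (n + 1), f i) + n with hudef
  have hufn : ∀ n, f n ≤ u n := by
    intro n
    have h1 : f n ≤ ∑ i ∈ Finset.range (n + 1), f i :=
      Finset.single_le_sum (fun i _ => hf0 i) (Finset.self_mem_range_succ n)
    have h2 : (0:ℝ) ≤ n := Nat.cast_nonneg n
    simp only [hudef]
    linarith
  have hun : ∀ n : ℕ, (n : ℝ) ≤ u n := by
    intro n
    have h1 : (0:ℝ) ≤ ∑ i ∈ Finset.range (n + 1), f i := Finset.sum_nonneg fun i _ => hf0 i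
    simp only [hudef]
    linarith
  have hstep : ∀ n : ℕ, u n + 1 ≤ u (n + 1) := by
    intro n
    have hsum2 : ∑ i ∈ Finset.range (n + 1 + 1), f i
        = (∑ i ∈ Finset.range (n + 1), f i) + f (n + 1) := Finset.sum_range_succ f (n + 1)
    have h1 := hf0 (n + 1)
    simp only [hudef, hsum2]
    push_cast
    linarith
  have humono : Monotone u := monotone_nat_of_le_succ fun n => by linarith [hstep n]
  have hgap : ∀ a b : ℕ, a + 1 ≤ b → u a + 1 ≤ u b := fun a b hab =>
    le_trans (hstep a) (humono hab)
  -- cut-off functions and the function c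
  set ψ : ℕ → ℝ → ℝ := fun n t => min 1 (max 0 (u (n + 1) - t)) with hψdef
  have hψ0 : ∀ n t, 0 ≤ ψ n t := fun n t => le_min zero_le_one (le_max_left _ _)
  have hψ1 : ∀ n t, ψ n t ≤ 1 := fun n t => min_le_left _ _
  have hψcont : ∀ n, Continuous (ψ n) :=
    fun n => continuous_const.min (continuous_const.max (continuous_const.sub continuous_id))
  have hψeq1 : ∀ n t, t + 1 ≤ u (n + 1) → ψ n t = 1 := by
    intro n t h
    simp only [hψdef]
    rw [max_eq_right (by linarith), min_eq_left (by linarith)]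
  have hψeq0 : ∀ n t, u (n + 1) ≤ t → ψ n t = 0 := by
    intro n t h
    simp only [hψdef]
    rw [max_eq_left (by linarith), min_eq_right zero_le_one]
  set c : ℝ → ℝ := fun t => ∑' n, (1/2 : ℝ) ^ n * ψ n t with hcdef
  have hterm : ∀ n t, ‖(1/2 : ℝ) ^ n * ψ n t‖ ≤ (1/2 : ℝ) ^ n := by
    intro n t
    rw [Real.norm_eq_abs, abs_of_nonneg (mul_nonneg (by positivity) (hψ0 n t))]
    calc (1/2 : ℝ) ^ n * ψ n t ≤ (1/2 : ℝ) ^ n * 1 :=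
        mul_le_mul_of_nonneg_left (hψ1 n t) (by positivity)
      _ = (1/2 : ℝ) ^ n := mul_one _
  have hsummable : ∀ t, Summable fun n => (1/2 : ℝ) ^ n * ψ n t := fun t =>
    Summable.of_norm_bounded summable_geometric_two fun n => hterm n t
  have hccont : Continuous c := continuous_tsum
    (fun n => continuous_const.mul (hψcont n)) summable_geometric_two fun n t => hterm n t
  have hcnonneg : ∀ t, 0 ≤ c t := fun t =>
    tsum_nonneg fun n => mul_nonneg (by positivity) (hψ0 n t)
  have hcge : ∀ (N : ℕ) (t : ℝ), t < u (N + 1) → (1/2 : ℝ) ^ N ≤ c t := by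
    intro N t hlt
    have htail : ∀ i : ℕ, (1/2 : ℝ) ^ (i + (N + 1)) * ψ (i + (N + 1)) t
        = (1/2 : ℝ) ^ (i + (N + 1)) := by
      intro i
      rw [hψeq1 _ _ ?_, mul_one]
      have hg : u (N + 1) + 1 ≤ u (i + (N + 1) + 1) := hgap (N + 1) (i + (N + 1) + 1) (by omega)
      linarith
    have hsplit := Summable.sum_add_tsum_nat_add (f := fun n : ℕ => (1/2:ℝ) ^ n * ψ n t)
      (N + 1) (hsummable t)
    have htsum : (∑' i : ℕ, (1/2 : ℝ) ^ (i + (N + 1)) * ψ (i + (N + 1)) t)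
        = (1/2 : ℝ) ^ N := by
      rw [tsum_congr htail,
        tsum_congr (fun i : ℕ => pow_add (1/2:ℝ) i (N + 1)),
        tsum_mul_right, tsum_geometric_two, pow_succ]
      ring
    have hceq : c t = (∑ i ∈ Finset.range (N + 1), (1/2 : ℝ) ^ i * ψ i t) + (1/2 : ℝ) ^ N := by
      rw [hcdef]
      dsimp only
      rw [← hsplit, htsum]
    rw [hceq]
    have hpos : 0 ≤ ∑ i ∈ Finset.range (N + 1), (1/2 : ℝ) ^ i * ψ i t :=
      Finset.sum_nonneg fun i _ => mul_nonneg (by positivity) (hψ0 i t)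
    linarith
  have hcle : ∀ (N : ℕ) (t : ℝ), u N ≤ t → c t ≤ 2 * (1/2 : ℝ) ^ N := by
    intro N t hle
    have hzero : ∀ i ∈ Finset.range N, (1/2 : ℝ) ^ i * ψ i t = 0 := by
      intro i hi
      rw [hψeq0 i t (le_trans (humono (Nat.succ_le_of_lt (Finset.mem_range.1 hi))) hle), mul_zero]
    have hsplit := Summable.sum_add_tsum_nat_add (f := fun n : ℕ => (1/2:ℝ) ^ n * ψ n t)
      N (hsummable t)
    have hsumg : Summable fun i : ℕ => (1/2 : ℝ) ^ (i + N) := by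
      simpa [pow_add] using summable_geometric_two.mul_right ((1/2:ℝ) ^ N)
    have h1 : (∑' i : ℕ, (1/2 : ℝ) ^ (i + N) * ψ (i + N) t) ≤ 2 * (1/2 : ℝ) ^ N := by
      have hle2 := Summable.tsum_le_tsum (f := fun i : ℕ => (1/2:ℝ) ^ (i + N) * ψ (i + N) t)
        (g := fun i : ℕ => (1/2:ℝ) ^ (i + N))
        (fun i => by
          calc (1/2:ℝ) ^ (i + N) * ψ (i + N) t ≤ (1/2:ℝ) ^ (i + N) * 1 :=
              mul_le_mul_of_nonneg_left (hψ1 _ _) (by positivity)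
            _ = (1/2:ℝ) ^ (i + N) := mul_one _)
        ((summable_nat_add_iff N).2 (hsummable t)) hsumg
      refine hle2.trans ?_
      have hgeq : (∑' i : ℕ, (1/2:ℝ) ^ (i + N)) = 2 * (1/2:ℝ) ^ N := by
        rw [tsum_congr (fun i : ℕ => pow_add (1/2:ℝ) i N), tsum_mul_right, tsum_geometric_two]
      exact hgeq.le
    have hceq : c t = (∑ i ∈ Finset.range N, (1/2:ℝ) ^ i * ψ i t)
        + ∑' i : ℕ, (1/2:ℝ) ^ (i + N) * ψ (i + N) t := by
      rw [hcdef]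
      dsimp only
      rw [← hsplit]
    rw [hceq, Finset.sum_eq_zero hzero, zero_add]
    exact h1
  have hctend : Tendsto c atTop (𝓝 0) := by
    rw [Metric.tendsto_atTop]
    intro ε hε
    obtain ⟨N, hN⟩ := exists_pow_lt_of_lt_one (half_pos hε) (by norm_num : (1/2:ℝ) < 1)
    refine ⟨u N, fun t ht => ?_⟩
    rw [Real.dist_eq, sub_zero, abs_of_nonneg (hcnonneg t)]
    calc c t ≤ 2 * (1/2:ℝ) ^ N := hcle N t ht
      _ < ε := by linarith
  refine ⟨c, hccont.continuousOn, fun t _ => hcnonneg t, hctend, ?_⟩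
  intro x hx hBU hD t ht
  have hM0 := (stmt12_supNorm_facts hBU.1).1
  rcases lt_or_ge t (u 0) with hcase | hcase
  · have hc2 : (1:ℝ) ≤ c t := by
      have h := hcge 0 t (lt_of_lt_of_le hcase (humono (Nat.zero_le 1)))
      simpa using h
    calc ‖x t‖ ≤ supNorm m x := hA x hx hBU hD t ht
      _ ≤ c t * supNorm m x := le_mul_of_one_le_left hM0 hc2
  · set N := Nat.findGreatest (fun n => u n ≤ t) ⌈t⌉₊ with hNdef
    have hN1 : u N ≤ t := by
      rw [hNdef]
      exact Nat.findGreatest_spec (P := fun n => u n ≤ t) (n := ⌈t⌉₊) (Nat.zero_le _) hcase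
    have hN2 : t < u (N + 1) := by
      rcases le_or_gt (N + 1) ⌈t⌉₊ with h | h
      · exact lt_of_not_ge (Nat.findGreatest_is_greatest (Nat.lt_succ_self N) h)
      · have hNge : (⌈t⌉₊ : ℝ) ≤ N := by exact_mod_cast Nat.lt_succ_iff.1 h
        have hceil : t ≤ (⌈t⌉₊ : ℝ) := Nat.le_ceil t
        have hu2 : ((N:ℝ) + 1) ≤ u (N + 1) := by
          have := hun (N + 1)
          push_cast at this
          linarith
        linarith
    have hb := hf N x hx hBU hD t (le_trans (hufn N) hN1)
    have hcb := hcge N t hN2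
    calc ‖x t‖ ≤ (1/2:ℝ) ^ N * supNorm m x := hb
      _ ≤ c t * supNorm m x := mul_le_mul_of_nonneg_right hcb hM0
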